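/- Let p_u(x) = ∑_{k=0}^{2n} φ_k(x)² (the GUE density of order 2n+1 at σ²=1/2) and p_s(x) = p_u(x) + τ_{2n+1}(x), where τ_m(x) = √(m/2) φ_{m−1}(x)·(1/2)∫_ℝ sign(x−t) φ_m(t) dt. Then 2 p_s''' + 2(4n+1−x²) p_s' − 4x p_s = −3 p_u' − 6x p_u on ℝ. -/

import Mathlib

open Real MeasureTheory

/-- Physicists' Hermite polynomial `H n x = (-1)^n e^{x^2} (d/dx)^n e^{-x^2}`. -/
noncomputable def physHermite (n : ℕ) (x : ℝ) : ℝ :=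
  (-1)^n * Real.exp (x^2) * iteratedDeriv n (fun y => Real.exp (-y^2)) x

/-- Hermite function `φ k x = (2^k k! √π)^{-1/2} H_k(x) e^{-x²/2}`. -/
noncomputable def hermiteFn (k : ℕ) (x : ℝ) : ℝ :=
  (Real.sqrt (2^k * k.factorial * Real.sqrt Real.pi))⁻¹ * physHermite k x * Real.exp (-x^2/2)

/-- Confluent hypergeometric function `₁F₁(-k; b; x)` with nonpositive integer first
parameter `-k`; it is the polynomial `∑_{j=0}^{k} ((-k)_j/(b)_j) x^j/j!`, where the rising
factorial `(-k)_j = (-1)^j k!/(k-j)!`. -/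
noncomputable def oneF1neg (k : ℕ) (b x : ℝ) : ℝ :=
  ∑ j ∈ Finset.range (k+1),
    ((-1)^j * (k.descFactorial j : ℝ) / ∏ i ∈ Finset.range j, (b + i)) * x^j / (j.factorial : ℝ)

/-- GUE mean density at σ² = 1/2: partial sum of squared Hermite functions. -/
noncomputable def pGUE (n : ℕ) (x : ℝ) : ℝ := ∑ k ∈ Finset.range n, hermiteFn k x ^ 2

/-- GUE mean density with general variance σ². -/
noncomputable def pGUEvar (n : ℕ) (σ x : ℝ) : ℝ :=
  (σ * Real.sqrt 2)⁻¹ * pGUE n (x / (σ * Real.sqrt 2))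

/-- The function τₙ from the GSE/GOE densities. -/
noncomputable def tauFn (n : ℕ) (x : ℝ) : ℝ :=
  Real.sqrt (n/2) * hermiteFn (n-1) x *
    ((1/2) * ∫ t : ℝ, Real.sign (x - t) * hermiteFn n t)

/-- The function αₙ (for odd n) from the GOE density. -/
noncomputable def alphaFn (n : ℕ) (x : ℝ) : ℝ :=
  hermiteFn (n-1) x / ∫ t : ℝ, hermiteFn (n-1) t

noncomputable def Hpoly : ℕ → Polynomial ℝ
  | 0 => 1
  | n+1 => Polynomial.C 2 * Polynomial.X * Hpoly n - Polynomial.derivative (Hpoly n)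

lemma iteratedDeriv_gauss (n : ℕ) : iteratedDeriv n (fun y : ℝ => Real.exp (-y^2))
    = fun x => (-1)^n * Real.exp (-x^2) * (Hpoly n).eval x := by
  induction n with
  | zero => funext x; simp [Hpoly]
  | succ n ih =>
    funext x
    rw [iteratedDeriv_succ, ih]
    have h1 : HasDerivAt (fun y : ℝ => -y^2) (-(2*x)) x := by
      have := (hasDerivAt_pow 2 x).fun_neg
      refine this.congr_deriv ?_
      simp
    have h2 := h1.exp
    have h3 := (Hpoly n).hasDerivAt x
    have h4 := ((h2.const_mul ((-1:ℝ)^n)).fun_mul h3)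
    rw [h4.deriv]
    simp only [Hpoly, Polynomial.eval_sub, Polynomial.eval_mul, Polynomial.eval_C,
      Polynomial.eval_X]
    ring

lemma physHermite_eq (n : ℕ) : physHermite n = fun x => (Hpoly n).eval x := by
  funext x
  unfold physHermite
  rw [iteratedDeriv_gauss]
  have h1 : ((-1:ℝ)^n)*((-1:ℝ)^n) = 1 := by rw [← mul_pow]; norm_num
  have h2 : Real.exp (x^2) * Real.exp (-x^2) = 1 := by rw [← Real.exp_add]; simp
  calc (-1:ℝ)^n * Real.exp (x^2) * ((-1)^n * Real.exp (-x^2) * (Hpoly n).eval x)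
      = (((-1:ℝ)^n*(-1)^n) * (Real.exp (x^2) * Real.exp (-x^2))) * (Hpoly n).eval x := by ring
    _ = (Hpoly n).eval x := by rw [h1, h2]; ring

lemma Hpoly_derivative : ∀ n : ℕ, Polynomial.derivative (Hpoly n)
    = Polynomial.C (2*(n:ℝ)) * Hpoly (n-1) := by
  intro n
  induction n using Nat.strong_induction_on with
  | _ n ih =>
    match n with
    | 0 => simp [Hpoly]
    | 1 => norm_num [Hpoly]
    | (k+2) =>
      have ih1 := ih (k+1) (by omega)
      have ih0 := ih k (by omega)
      simp only [Nat.add_sub_cancel] at ih1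
      have hrec : Hpoly (k+1) = Polynomial.C 2 * Polynomial.X * Hpoly k
          - Polynomial.C (2*(k:ℝ)) * Hpoly (k-1) := by
        show Polynomial.C 2 * Polynomial.X * Hpoly k - Polynomial.derivative (Hpoly k) = _
        rw [ih0]
      rw [show k+2-1 = k+1 from rfl, show Hpoly (k+2) = Polynomial.C 2 * Polynomial.X
        * Hpoly (k+1) - Polynomial.derivative (Hpoly (k+1)) from rfl, ih1]
      simp only [Polynomial.derivative_sub, Polynomial.derivative_mul, Polynomial.derivative_C,
        Polynomial.derivative_X, ih1, ih0]
      rw [hrec]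
      apply Polynomial.funext
      intro x
      simp only [Polynomial.eval_sub, Polynomial.eval_add, Polynomial.eval_mul, Polynomial.eval_C,
        Polynomial.eval_X, Polynomial.eval_one, Polynomial.eval_zero, Polynomial.eval_smul,
        smul_eq_mul, mul_one, mul_zero, zero_mul, add_zero, zero_add]
      push_cast
      ring

noncomputable def cH (k : ℕ) : ℝ := (Real.sqrt (2^k * k.factorial * Real.sqrt Real.pi))⁻¹

lemma hermiteFn_eq (k : ℕ) : hermiteFn k
    = fun x => cH k * (Hpoly k).eval x * Real.exp (-x^2/2) := by
  funext x
  rw [hermiteFn, physHermite_eq]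
  rfl

lemma cH_arg_pos (k : ℕ) : (0:ℝ) < 2^k * k.factorial * Real.sqrt Real.pi := by
  have := Real.sqrt_pos.2 Real.pi_pos
  positivity

lemma cH_succ (k : ℕ) : cH (k+1) * Real.sqrt (2*(k:ℝ)+2) = cH k := by
  have h : (2:ℝ)^(k+1) * (k+1).factorial * Real.sqrt Real.pi
      = (2*(k:ℝ)+2) * (2^k * k.factorial * Real.sqrt Real.pi) := by
    rw [Nat.factorial_succ]
    push_cast
    ring
  have h2 : (0:ℝ) < 2*(k:ℝ)+2 := by positivity
  have hnz : Real.sqrt (2*(k:ℝ)+2) ≠ 0 := by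
    intro hz
    exact absurd (Real.sqrt_eq_zero h2.le |>.1 hz) (by positivity)
  rw [cH, cH, h, Real.sqrt_mul h2.le, mul_inv, mul_comm, ← mul_assoc,
    mul_inv_cancel₀ hnz, one_mul]

lemma cH_mul (k : ℕ) : cH k * (2*(k:ℝ)) = Real.sqrt (2*(k:ℝ)) * cH (k-1) := by
  cases k with
  | zero => simp
  | succ m =>
    have hc := cH_succ m
    have hs : Real.sqrt (2*(m:ℝ)+2) * Real.sqrt (2*(m:ℝ)+2) = 2*(m:ℝ)+2 :=
      Real.mul_self_sqrt (by positivity)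
    have harg : (2*((m+1:ℕ):ℝ)) = 2*(m:ℝ)+2 := by push_cast; ring
    rw [Nat.add_sub_cancel, harg]
    linear_combination (-(cH (m+1))) * hs + Real.sqrt (2*(m:ℝ)+2) * hc

lemma continuous_hermiteFn (k : ℕ) : Continuous (hermiteFn k) := by
  rw [hermiteFn_eq]
  exact (continuous_const.mul (Hpoly k).continuous).mul
    (Real.continuous_exp.comp (by continuity))

lemma hasDerivAt_hermiteFn_down (k : ℕ) (x : ℝ) : HasDerivAt (hermiteFn k)
    (Real.sqrt (2*(k:ℝ)) * hermiteFn (k-1) x - x * hermiteFn k x) x := by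
  have h1 : HasDerivAt (fun y : ℝ => -y^2/2) (-x) x := by
    have := ((hasDerivAt_pow 2 x).fun_neg).div_const 2
    refine this.congr_deriv ?_
    push_cast
    ring
  have h2 := h1.exp
  have H : HasDerivAt (fun y => cH k * (Hpoly k).eval y * Real.exp (-y^2/2))
      (cH k * (Hpoly k).eval x * (Real.exp (-x^2/2) * -x)
        + cH k * (Polynomial.derivative (Hpoly k)).eval x * Real.exp (-x^2/2)) x := by
    have := (((Hpoly k).hasDerivAt x).const_mul (cH k)).fun_mul h2
    refine this.congr_deriv ?_
    ring
  rw [hermiteFn_eq k]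
  apply H.congr_deriv
  simp only [hermiteFn_eq, Hpoly_derivative k, Polynomial.eval_mul, Polynomial.eval_C]
  have hck := cH_mul k
  linear_combination ((Hpoly (k-1)).eval x * Real.exp (-x^2/2)) * hck

lemma hermiteFn_rec (k : ℕ) (x : ℝ) : Real.sqrt (2*(k:ℝ)+2) * hermiteFn (k+1) x
    = 2*x*hermiteFn k x - Real.sqrt (2*(k:ℝ)) * hermiteFn (k-1) x := by
  simp only [hermiteFn_eq]
  have hrec : (Hpoly (k+1)).eval x = 2*x*(Hpoly k).eval x - 2*(k:ℝ)*(Hpoly (k-1)).eval x := by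
    rw [show Hpoly (k+1) = Polynomial.C 2 * Polynomial.X * Hpoly k
      - Polynomial.derivative (Hpoly k) from rfl, Hpoly_derivative k]
    simp only [Polynomial.eval_sub, Polynomial.eval_mul, Polynomial.eval_C, Polynomial.eval_X]
  have hc := cH_succ k
  have hck := cH_mul k
  rw [hrec]
  linear_combination ((2*x*(Hpoly k).eval x - 2*(k:ℝ)*(Hpoly (k-1)).eval x)
    * Real.exp (-x^2/2)) * hc - ((Hpoly (k-1)).eval x * Real.exp (-x^2/2)) * hck

lemma hasDerivAt_hermiteFn_up (k : ℕ) (x : ℝ) : HasDerivAt (hermiteFn k)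
    (x * hermiteFn k x - Real.sqrt (2*(k:ℝ)+2) * hermiteFn (k+1) x) x := by
  apply (hasDerivAt_hermiteFn_down k x).congr_deriv
  linear_combination hermiteFn_rec k x

lemma pow_gauss_bound (i : ℕ) (x : ℝ) : |x|^i * Real.exp (-x^2/2)
    ≤ (1 + 4^i * i.factorial) * Real.exp (-(1/4) * x^2) := by
  have hx1 : |x|^i ≤ 1 + (x^2)^i := by
    rcases le_total (|x|) 1 with h | h
    · have h1 : |x|^i ≤ 1 := pow_le_one₀ (abs_nonneg x) h
      have h2 : (0:ℝ) ≤ (x^2)^i := by positivity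
      linarith
    · have h2 : |x|^i ≤ |x|^(2*i) := pow_le_pow_right₀ h (by omega)
      have h3 : |x|^(2*i) = (x^2)^i := by rw [pow_mul, sq_abs]
      linarith [h3 ▸ h2]
  have hkey : (x^2)^i ≤ 4^i * i.factorial * Real.exp (x^2/4) := by
    have h := Real.pow_div_factorial_le_exp (x := x^2/4) (by positivity) i
    have h4 : (x^2)^i = 4^i * (x^2/4)^i := by
      rw [← mul_pow, show (4:ℝ)*(x^2/4) = x^2 by ring]
    rw [h4]
    have hfac : (0:ℝ) < i.factorial := by positivity
    rw [div_le_iff₀ hfac] at h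
    calc (4:ℝ)^i * (x^2/4)^i ≤ 4^i * (Real.exp (x^2/4) * i.factorial) := by
          apply mul_le_mul_of_nonneg_left h (by positivity)
      _ = 4^i * i.factorial * Real.exp (x^2/4) := by ring
  have e1 : Real.exp (-x^2/2) ≤ Real.exp (-(1/4)*x^2) := by
    apply Real.exp_le_exp.2
    nlinarith [sq_nonneg x]
  have e2 : Real.exp (x^2/4) * Real.exp (-x^2/2) = Real.exp (-(1/4)*x^2) := by
    rw [← Real.exp_add]
    congr 1
    ring
  have hexp : (0:ℝ) < Real.exp (-x^2/2) := Real.exp_pos _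
  calc |x|^i * Real.exp (-x^2/2) ≤ (1 + (x^2)^i) * Real.exp (-x^2/2) :=
        mul_le_mul_of_nonneg_right hx1 hexp.le
    _ = Real.exp (-x^2/2) + (x^2)^i * Real.exp (-x^2/2) := by ring
    _ ≤ Real.exp (-(1/4)*x^2) + (4^i * i.factorial * Real.exp (x^2/4)) * Real.exp (-x^2/2) := by
        gcongr
    _ = Real.exp (-(1/4)*x^2) + 4^i * i.factorial * (Real.exp (x^2/4) * Real.exp (-x^2/2)) := by
        ring
    _ = (1 + 4^i * i.factorial) * Real.exp (-(1/4)*x^2) := by rw [e2]; ring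

lemma integrable_poly_gauss (p : Polynomial ℝ) :
    Integrable (fun x : ℝ => p.eval x * Real.exp (-x^2/2)) := by
  classical
  set C0 : ℝ := ∑ i ∈ Finset.range (p.natDegree+1), |p.coeff i| * (1 + 4^i * i.factorial) with hC0
  apply Integrable.mono' (g := fun x => C0 * Real.exp (-(1/4) * x^2))
  · exact (integrable_exp_neg_mul_sq (by norm_num : (0:ℝ) < 1/4)).const_mul C0
  · exact (p.continuous.mul (Real.continuous_exp.comp (by continuity))).aestronglyMeasurable
  · refine Filter.Eventually.of_forall fun x => ?_
    have habs : |p.eval x| ≤ ∑ i ∈ Finset.range (p.natDegree+1), |p.coeff i| * |x|^i := by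
      rw [Polynomial.eval_eq_sum_range]
      refine (Finset.abs_sum_le_sum_abs _ _).trans ?_
      apply Finset.sum_le_sum
      intro i _
      rw [abs_mul, abs_pow]
    have hnorm : ‖p.eval x * Real.exp (-x^2/2)‖ = |p.eval x| * Real.exp (-x^2/2) := by
      rw [Real.norm_eq_abs, abs_mul, Real.abs_exp]
    rw [hnorm]
    calc |p.eval x| * Real.exp (-x^2/2)
        ≤ (∑ i ∈ Finset.range (p.natDegree+1), |p.coeff i| * |x|^i) * Real.exp (-x^2/2) :=
          mul_le_mul_of_nonneg_right habs (Real.exp_pos _).le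
      _ = ∑ i ∈ Finset.range (p.natDegree+1), |p.coeff i| * (|x|^i * Real.exp (-x^2/2)) := by
          rw [Finset.sum_mul]; congr 1; funext i; ring
      _ ≤ ∑ i ∈ Finset.range (p.natDegree+1),
            |p.coeff i| * ((1 + 4^i * i.factorial) * Real.exp (-(1/4) * x^2)) := by
          apply Finset.sum_le_sum
          intro i _
          exact mul_le_mul_of_nonneg_left (pow_gauss_bound i x) (abs_nonneg _)
      _ = C0 * Real.exp (-(1/4) * x^2) := by
          rw [hC0, Finset.sum_mul]; congr 1; funext i; ring

lemma integrable_hermiteFn (k : ℕ) : Integrable (hermiteFn k) := by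
  rw [hermiteFn_eq]
  have := integrable_poly_gauss (Polynomial.C (cH k) * Hpoly k)
  simpa [Polynomial.eval_mul, Polynomial.eval_C] using this

lemma hasDerivAt_pGUE (N : ℕ) (x : ℝ) : HasDerivAt (pGUE N)
    (-(Real.sqrt (2*(N:ℝ)) * hermiteFn (N-1) x * hermiteFn N x)) x := by
  have hterm : ∀ k : ℕ, HasDerivAt (fun y => hermiteFn k y ^ 2)
      ((Real.sqrt (2*(k:ℝ)) * hermiteFn (k-1) x * hermiteFn k x)
        - (Real.sqrt (2*(k:ℝ)+2) * hermiteFn k x * hermiteFn (k+1) x)) x := by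
    intro k
    have hd := hasDerivAt_hermiteFn_down k x
    have hu := hasDerivAt_hermiteFn_up k x
    have huniq : Real.sqrt (2*(k:ℝ)) * hermiteFn (k-1) x - x * hermiteFn k x
        = x * hermiteFn k x - Real.sqrt (2*(k:ℝ)+2) * hermiteFn (k+1) x := hd.unique hu
    apply (hd.pow 2).congr_deriv
    push_cast
    linear_combination (hermiteFn k x) * huniq
  have hsum : HasDerivAt (fun y => ∑ k ∈ Finset.range N, hermiteFn k y ^ 2)
      (∑ k ∈ Finset.range N, ((Real.sqrt (2*(k:ℝ)) * hermiteFn (k-1) x * hermiteFn k x)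
        - (Real.sqrt (2*((k+1:ℕ):ℝ)) * hermiteFn ((k+1)-1) x * hermiteFn (k+1) x))) x := by
    apply HasDerivAt.fun_sum
    intro k _
    apply (hterm k).congr_deriv
    rw [Nat.add_sub_cancel, show (2*((k+1:ℕ):ℝ)) = 2*(k:ℝ)+2 by push_cast; ring]
  have : pGUE N = fun y => ∑ k ∈ Finset.range N, hermiteFn k y ^ 2 := rfl
  rw [this]
  apply hsum.congr_deriv
  rw [Finset.sum_range_sub' (fun k => Real.sqrt (2*(k:ℝ)) * hermiteFn (k-1) x * hermiteFn k x) N]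
  norm_num

lemma pGUE_cd (m : ℕ) (x : ℝ) : pGUE (m+1) x
    = ((m:ℝ)+1)*(hermiteFn m x^2 + hermiteFn (m+1) x^2)
      - Real.sqrt (2*(m:ℝ)+2) * x * hermiteFn m x * hermiteFn (m+1) x := by
  induction m with
  | zero =>
    have h := hermiteFn_rec 0 x
    norm_num at h
    have h1 : hermiteFn 1 x = Real.sqrt 2 * x * hermiteFn 0 x := by
      have hs : Real.sqrt 2 * Real.sqrt 2 = 2 := Real.mul_self_sqrt (by norm_num)
      linear_combination (Real.sqrt 2/2) * h + (-(hermiteFn 1 x)/2) * hs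
    have hp : pGUE 1 x = hermiteFn 0 x ^ 2 := by
      simp [pGUE]
    rw [hp, h1]
    norm_num
    ring
  | succ m ih =>
    have hrec := hermiteFn_rec (m+1) x
    rw [show (2*((m+1:ℕ):ℝ)) = 2*(m:ℝ)+2 by push_cast; ring, Nat.add_sub_cancel,
      show (2*(m:ℝ)+2+2 : ℝ) = 2*(m:ℝ)+4 by ring] at hrec
    have hs : Real.sqrt (2*(m:ℝ)+2) ^ 2 = 2*(m:ℝ)+2 := Real.sq_sqrt (by positivity)
    have hc : Real.sqrt (2*(m:ℝ)+4) ^ 2 = 2*(m:ℝ)+4 := Real.sq_sqrt (by positivity)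
    have hstep : pGUE (m+1+1) x = pGUE (m+1) x + hermiteFn (m+1) x ^ 2 := by
      simp [pGUE, Finset.sum_range_succ]
    rw [hstep, ih]
    push_cast
    rw [show (2*((m:ℝ)+1)+2 : ℝ) = 2*(m:ℝ)+4 by ring]
    have hsnz : (Real.sqrt (2*(m:ℝ)+2))^2 ≠ 0 := by
      rw [hs]; positivity
    apply mul_left_cancel₀ hsnz
    linear_combination (((m:ℝ)+1)*(Real.sqrt (2*(m:ℝ)+2)*hermiteFn m x
        + 2*x*hermiteFn (m+1) x - Real.sqrt (2*(m:ℝ)+4)*hermiteFn (m+2) x)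
        - (2*(m:ℝ)+2)*x*hermiteFn (m+1) x) * hrec
      + (-(x*hermiteFn (m+1) x*Real.sqrt (2*(m:ℝ)+2)*hermiteFn m x)
        - ((m:ℝ)+2)*hermiteFn (m+2) x^2
        + Real.sqrt (2*(m:ℝ)+4)*x*hermiteFn (m+1) x*hermiteFn (m+2) x) * hs
      + (((m:ℝ)+1)*hermiteFn (m+2) x^2) * hc

lemma measurable_sign_real : Measurable Real.sign := by
  have : Real.sign = fun r : ℝ => if r < 0 then (-1:ℝ) else if 0 < r then 1 else 0 :=
    funext fun r => rfl
  rw [this]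
  exact Measurable.ite measurableSet_Iio measurable_const
    (Measurable.ite measurableSet_Ioi measurable_const measurable_const)

lemma Phi_eq (k : ℕ) (x : ℝ) : (1/2) * ∫ t : ℝ, Real.sign (x - t) * hermiteFn k t
    = ((∫ t in Set.Iic (0:ℝ), hermiteFn k t) - (1/2) * ∫ t : ℝ, hermiteFn k t)
      + ∫ t in (0:ℝ)..x, hermiteFn k t := by
  have hint := integrable_hermiteFn k
  have hind : Integrable (fun t => (Set.Iic x).indicator (fun t => 2 * hermiteFn k t) t) :=
    (hint.const_mul 2).indicator measurableSet_Iic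
  have hae : (fun t => Real.sign (x - t) * hermiteFn k t)
      =ᵐ[volume] fun t => (Set.Iic x).indicator (fun t => 2 * hermiteFn k t) t - hermiteFn k t := by
    have hne : ∀ᵐ t : ℝ, t ≠ x := by
      rw [MeasureTheory.ae_iff]
      have : {t : ℝ | ¬ t ≠ x} = {x} := by ext t; simp [eq_comm]
      rw [this]
      exact Real.volume_singleton
    filter_upwards [hne] with t ht
    rcases lt_or_gt_of_ne ht with h | h
    · rw [Real.sign_of_pos (by linarith : (0:ℝ) < x - t),
        Set.indicator_of_mem (Set.mem_Iic.2 h.le)]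
      ring
    · rw [Real.sign_of_neg (by linarith : x - t < (0:ℝ)),
        Set.indicator_of_notMem (by simp [Set.mem_Iic]; linarith)]
      ring
  have h1 : ∫ t : ℝ, Real.sign (x - t) * hermiteFn k t
      = (∫ t : ℝ, (Set.Iic x).indicator (fun t => 2 * hermiteFn k t) t) - ∫ t : ℝ, hermiteFn k t := by
    rw [MeasureTheory.integral_congr_ae hae]
    exact MeasureTheory.integral_sub hind hint
  have h2 : (∫ t : ℝ, (Set.Iic x).indicator (fun t => 2 * hermiteFn k t) t)
      = 2 * ∫ t in Set.Iic x, hermiteFn k t := by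
    rw [MeasureTheory.integral_indicator measurableSet_Iic, MeasureTheory.integral_const_mul]
  have h3 : (∫ t in Set.Iic x, hermiteFn k t) - (∫ t in Set.Iic (0:ℝ), hermiteFn k t)
      = ∫ t in (0:ℝ)..x, hermiteFn k t :=
    intervalIntegral.integral_Iic_sub_Iic hint.integrableOn hint.integrableOn
  rw [h1, h2]
  linarith [h3]

lemma hasDerivAt_Phi (k : ℕ) (x : ℝ) :
    HasDerivAt (fun y => (1/2) * ∫ t : ℝ, Real.sign (y - t) * hermiteFn k t)
      (hermiteFn k x) x := by
  have hfe : (fun y => (1/2) * ∫ t : ℝ, Real.sign (y - t) * hermiteFn k t)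
      = fun y => ((∫ t in Set.Iic (0:ℝ), hermiteFn k t) - (1/2) * ∫ t : ℝ, hermiteFn k t)
        + ∫ t in (0:ℝ)..y, hermiteFn k t := funext fun y => Phi_eq k y
  rw [hfe]
  have hftc : HasDerivAt (fun y => ∫ t in (0:ℝ)..y, hermiteFn k t) (hermiteFn k x) x := by
    apply intervalIntegral.integral_hasDerivAt_right
      ((integrable_hermiteFn k).intervalIntegrable)
      ((continuous_hermiteFn k).aestronglyMeasurable.stronglyMeasurableAtFilter)
      (continuous_hermiteFn k).continuousAt
  exact hftc.const_add _

theorem gse_density_ode (n : ℕ) (hn : 1 ≤ n) (ps : ℝ → ℝ)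
    (hps : ps = fun y => pGUE (2*n+1) y + tauFn (2*n+1) y) (x : ℝ) :
    2 * iteratedDeriv 3 ps x + 2*(4*n + 1 - x^2) * deriv ps x - 4*x * ps x =
      -3 * deriv (pGUE (2*n+1)) x - 6*x * pGUE (2*n+1) x := by
  have ha : Real.sqrt (4*(n:ℝ)+2)^2 = 4*(n:ℝ)+2 := Real.sq_sqrt (by positivity)
  have hsA : ∀ y : ℝ, HasDerivAt (hermiteFn (2*n))
      (y * hermiteFn (2*n) y - Real.sqrt (4*(n:ℝ)+2) * hermiteFn (2*n+1) y) y := by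
    intro y
    have h := hasDerivAt_hermiteFn_up (2*n) y
    rw [show (2*((2*n:ℕ):ℝ)+2) = 4*(n:ℝ)+2 by push_cast; ring] at h
    exact h
  have hsB : ∀ y : ℝ, HasDerivAt (hermiteFn (2*n+1))
      (Real.sqrt (4*(n:ℝ)+2) * hermiteFn (2*n) y - y * hermiteFn (2*n+1) y) y := by
    intro y
    have h := hasDerivAt_hermiteFn_down (2*n+1) y
    rw [show (2*((2*n+1:ℕ):ℝ)) = 4*(n:ℝ)+2 by push_cast; ring] at h
    exact h
  have hsP : ∀ y : ℝ, HasDerivAt (fun z => (1/2) * ∫ t : ℝ, Real.sign (z - t) * hermiteFn (2*n+1) t)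
      (hermiteFn (2*n+1) y) y := fun y => hasDerivAt_Phi (2*n+1) y
  have hsu : ∀ y : ℝ, HasDerivAt (pGUE (2*n+1))
      (-(Real.sqrt (4*(n:ℝ)+2) * hermiteFn (2*n) y * hermiteFn (2*n+1) y)) y := by
    intro y
    have h := hasDerivAt_pGUE (2*n+1) y
    rw [show (2*((2*n+1:ℕ):ℝ)) = 4*(n:ℝ)+2 by push_cast; ring] at h
    exact h
  have hco : Real.sqrt (((2*n+1:ℕ):ℝ)/2) = Real.sqrt (4*(n:ℝ)+2)/2 := by
    have h4 : Real.sqrt 4 = 2 := by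
      rw [show (4:ℝ) = 2^2 by norm_num, Real.sqrt_sq (by norm_num : (0:ℝ) ≤ 2)]
    rw [show (4*(n:ℝ)+2) = 4 * (((2*n+1:ℕ):ℝ)/2) by push_cast; ring,
      Real.sqrt_mul (by norm_num : (0:ℝ) ≤ 4), h4]
    ring
  have hps' : ps = fun y => pGUE (2*n+1) y + Real.sqrt (4*(n:ℝ)+2)/2 * (hermiteFn (2*n) y * ((1/2) * ∫ t : ℝ, Real.sign (y - t) * hermiteFn (2*n+1) t)) := by
    rw [hps]
    funext y
    simp only [tauFn]
    rw [show 2*n+1-1 = 2*n by omega, hco]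
    ring
  have hd1 : ∀ y : ℝ, HasDerivAt ps (-(Real.sqrt (4*(n:ℝ)+2) * hermiteFn (2*n) y * hermiteFn (2*n+1) y) + Real.sqrt (4*(n:ℝ)+2)/2 * ((y * hermiteFn (2*n) y - Real.sqrt (4*(n:ℝ)+2) * hermiteFn (2*n+1) y) * ((1/2) * ∫ t : ℝ, Real.sign (y - t) * hermiteFn (2*n+1) t) + hermiteFn (2*n) y * hermiteFn (2*n+1) y)) y := by
    intro y
    rw [hps']
    exact (hsu y).add ((((hsA y).mul (hsP y)).const_mul (Real.sqrt (4*(n:ℝ)+2)/2)))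
  have hd2 : ∀ y : ℝ, HasDerivAt (fun y => -(Real.sqrt (4*(n:ℝ)+2) * hermiteFn (2*n) y * hermiteFn (2*n+1) y) + Real.sqrt (4*(n:ℝ)+2)/2 * ((y * hermiteFn (2*n) y - Real.sqrt (4*(n:ℝ)+2) * hermiteFn (2*n+1) y) * ((1/2) * ∫ t : ℝ, Real.sign (y - t) * hermiteFn (2*n+1) t) + hermiteFn (2*n) y * hermiteFn (2*n+1) y)) (Real.sqrt (4*(n:ℝ)+2)/2 * (hermiteFn (2*n) y * ((1 - Real.sqrt (4*(n:ℝ)+2)^2 + y^2) * ((1/2) * ∫ t : ℝ, Real.sign (y - t) * hermiteFn (2*n+1) t) + y * hermiteFn (2*n+1) y - Real.sqrt (4*(n:ℝ)+2) * hermiteFn (2*n) y))) y := by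
    intro y
    have t2 := (((hsA y).const_mul (Real.sqrt (4*(n:ℝ)+2))).mul (hsB y)).neg
    have t3 := ((hasDerivAt_id y).mul (hsA y)).sub ((hsB y).const_mul (Real.sqrt (4*(n:ℝ)+2)))
    have t4 := (t3.mul (hsP y)).add ((hsA y).mul (hsB y))
    have t6 := t2.add (t4.const_mul (Real.sqrt (4*(n:ℝ)+2)/2))
    exact t6.congr_deriv (by simp only [id_eq, Pi.mul_apply, Pi.add_apply, Pi.sub_apply, Pi.neg_apply]; push_cast; ring)
  have hd3 : ∀ y : ℝ, HasDerivAt (fun y => Real.sqrt (4*(n:ℝ)+2)/2 * (hermiteFn (2*n) y * ((1 - Real.sqrt (4*(n:ℝ)+2)^2 + y^2) * ((1/2) * ∫ t : ℝ, Real.sign (y - t) * hermiteFn (2*n+1) t) + y * hermiteFn (2*n+1) y - Real.sqrt (4*(n:ℝ)+2) * hermiteFn (2*n) y))) (Real.sqrt (4*(n:ℝ)+2) * hermiteFn (2*n) y * hermiteFn (2*n+1) y - Real.sqrt (4*(n:ℝ)+2)^2/2 * hermiteFn (2*n+1) y * ((1/2) * ∫ t : ℝ, Real.sign (y - t) * hermiteFn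 (2*n+1) t) + Real.sqrt (4*(n:ℝ)+2)^3/2 * hermiteFn (2*n) y * hermiteFn (2*n+1) y + Real.sqrt (4*(n:ℝ)+2)^4/2 * hermiteFn (2*n+1) y * ((1/2) * ∫ t : ℝ, Real.sign (y - t) * hermiteFn (2*n+1) t) + 3/2 * y * Real.sqrt (4*(n:ℝ)+2) * hermiteFn (2*n) y * ((1/2) * ∫ t : ℝ, Real.sign (y - t) * hermiteFn (2*n+1) t) - y * Real.sqrt (4*(n:ℝ)+2)^2/2 * hermiteFn (2*n+1) y^2 - y * Real.sqrt (4*(n:ℝ)+2)^2/2 * hermiteFn (2*n) y^2 - y * Real.sqrt (4*(n:ℝ)+2)^3/2 * hermiteFn (2*n) y * ((1/2) * ∫ t : ℝ, Real.sign (y - t) * hermiteFn (2*n+1) t) + y^2 * Real.sqrt (4*(n:ℝ)+2)/2 * hermiteFn (2*n) y * hermiteFn (2*n+1) y - y^2 * Real.sqrt (4*(n:ℝ)+2)^2/2 * hermiteFn (2*n+1) y * ((1/2) * ∫ t : ℝ, Real.sign (y - t) * hermiteFn (2*n+1) t) + y^3 * Real.sqrt (4*(n:ℝ)+2)/2 *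 hermiteFn (2*n) y * ((1/2) * ∫ t : ℝ, Real.sign (y - t) * hermiteFn (2*n+1) t)) y := by
    intro y
    have hpoly : HasDerivAt (fun y : ℝ => 1 - Real.sqrt (4*(n:ℝ)+2)^2 + y^2) ((2:ℕ) * y^(2-1)) y :=
      (hasDerivAt_pow 2 y).const_add (1 - Real.sqrt (4*(n:ℝ)+2)^2)
    have hinner := ((hpoly.mul (hsP y)).add ((hasDerivAt_id y).mul (hsB y))).sub
      ((hsA y).const_mul (Real.sqrt (4*(n:ℝ)+2)))
    have houter := ((hsA y).mul hinner).const_mul (Real.sqrt (4*(n:ℝ)+2)/2)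
    exact houter.congr_deriv (by simp only [id_eq, Pi.mul_apply, Pi.add_apply, Pi.sub_apply, Pi.neg_apply]; push_cast; ring)
  have hD1 : deriv ps = fun y => -(Real.sqrt (4*(n:ℝ)+2) * hermiteFn (2*n) y * hermiteFn (2*n+1) y) + Real.sqrt (4*(n:ℝ)+2)/2 * ((y * hermiteFn (2*n) y - Real.sqrt (4*(n:ℝ)+2) * hermiteFn (2*n+1) y) * ((1/2) * ∫ t : ℝ, Real.sign (y - t) * hermiteFn (2*n+1) t) + hermiteFn (2*n) y * hermiteFn (2*n+1) y) := funext fun y => (hd1 y).deriv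
  have hD2 : deriv (fun y => -(Real.sqrt (4*(n:ℝ)+2) * hermiteFn (2*n) y * hermiteFn (2*n+1) y) + Real.sqrt (4*(n:ℝ)+2)/2 * ((y * hermiteFn (2*n) y - Real.sqrt (4*(n:ℝ)+2) * hermiteFn (2*n+1) y) * ((1/2) * ∫ t : ℝ, Real.sign (y - t) * hermiteFn (2*n+1) t) + hermiteFn (2*n) y * hermiteFn (2*n+1) y)) = fun y => Real.sqrt (4*(n:ℝ)+2)/2 * (hermiteFn (2*n) y * ((1 - Real.sqrt (4*(n:ℝ)+2)^2 + y^2) * ((1/2) * ∫ t : ℝ, Real.sign (y - t) * hermiteFn (2*n+1) t) + y * hermiteFn (2*n+1) y - Real.sqrt (4*(n:ℝ)+2) * hermiteFn (2*n) y)) := funext fun y => (hd2 y).deriv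
  have hD3 : deriv (fun y => Real.sqrt (4*(n:ℝ)+2)/2 * (hermiteFn (2*n) y * ((1 - Real.sqrt (4*(n:ℝ)+2)^2 + y^2) * ((1/2) * ∫ t : ℝ, Real.sign (y - t) * hermiteFn (2*n+1) t) + y * hermiteFn (2*n+1) y - Real.sqrt (4*(n:ℝ)+2) * hermiteFn (2*n) y))) = fun y => Real.sqrt (4*(n:ℝ)+2) * hermiteFn (2*n) y * hermiteFn (2*n+1) y - Real.sqrt (4*(n:ℝ)+2)^2/2 * hermiteFn (2*n+1) y * ((1/2) * ∫ t : ℝ, Real.sign (y - t) * hermiteFn (2*n+1) t) + Real.sqrt (4*(n:ℝ)+2)^3/2 * hermiteFn (2*n) y * hermiteFn (2*n+1) y + Real.sqrt (4*(n:ℝ)+2)^4/2 * hermiteFn (2*n+1) y * ((1/2) * ∫ t : ℝ, Real.sign (y - t) * hermiteFn (2*n+1) t) + 3/2 * y * Real.sqrt (4*(n:ℝ)+2) * hermiteFn (2*n) y * ((1/2) * ∫ t : ℝ, Real.sign (y - t) * hermiteFn (2*n+1) t) - y * Real.sqrt (4*(n:ℝ)+2)^2/2 * hermiteFn (2*n+1)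 y^2 - y * Real.sqrt (4*(n:ℝ)+2)^2/2 * hermiteFn (2*n) y^2 - y * Real.sqrt (4*(n:ℝ)+2)^3/2 * hermiteFn (2*n) y * ((1/2) * ∫ t : ℝ, Real.sign (y - t) * hermiteFn (2*n+1) t) + y^2 * Real.sqrt (4*(n:ℝ)+2)/2 * hermiteFn (2*n) y * hermiteFn (2*n+1) y - y^2 * Real.sqrt (4*(n:ℝ)+2)^2/2 * hermiteFn (2*n+1) y * ((1/2) * ∫ t : ℝ, Real.sign (y - t) * hermiteFn (2*n+1) t) + y^3 * Real.sqrt (4*(n:ℝ)+2)/2 * hermiteFn (2*n) y * ((1/2) * ∫ t : ℝ, Real.sign (y - t) * hermiteFn (2*n+1) t) := funext fun y => (hd3 y).deriv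
  have e3 : iteratedDeriv 3 ps x = Real.sqrt (4*(n:ℝ)+2) * hermiteFn (2*n) x * hermiteFn (2*n+1) x - Real.sqrt (4*(n:ℝ)+2)^2/2 * hermiteFn (2*n+1) x * ((1/2) * ∫ t : ℝ, Real.sign (x - t) * hermiteFn (2*n+1) t) + Real.sqrt (4*(n:ℝ)+2)^3/2 * hermiteFn (2*n) x * hermiteFn (2*n+1) x + Real.sqrt (4*(n:ℝ)+2)^4/2 * hermiteFn (2*n+1) x * ((1/2) * ∫ t : ℝ, Real.sign (x - t) * hermiteFn (2*n+1) t) + 3/2 * x * Real.sqrt (4*(n:ℝ)+2) * hermiteFn (2*n) x * ((1/2) * ∫ t : ℝ, Real.sign (x - t) * hermiteFn (2*n+1) t) - x * Real.sqrt (4*(n:ℝ)+2)^2/2 * hermiteFn (2*n+1) x^2 - x * Real.sqrt (4*(n:ℝ)+2)^2/2 * hermiteFn (2*n) x^2 - x * Real.sqrt (4*(n:ℝ)+2)^3/2 * hermiteFn (2*n) x * ((1/2) * ∫ t : ℝ, Real.sign (x - t) * hermiteFn (2*n+1) t) + x^2 * Real.sqrt (4*(n:ℝ)+2)/2 * hermiteFn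 (2*n) x * hermiteFn (2*n+1) x - x^2 * Real.sqrt (4*(n:ℝ)+2)^2/2 * hermiteFn (2*n+1) x * ((1/2) * ∫ t : ℝ, Real.sign (x - t) * hermiteFn (2*n+1) t) + x^3 * Real.sqrt (4*(n:ℝ)+2)/2 * hermiteFn (2*n) x * ((1/2) * ∫ t : ℝ, Real.sign (x - t) * hermiteFn (2*n+1) t) := by
    rw [iteratedDeriv_eq_iterate, show deriv^[3] ps = deriv (deriv (deriv ps)) from rfl,
      hD1, hD2, hD3]
  have e1 : deriv ps x = -(Real.sqrt (4*(n:ℝ)+2) * hermiteFn (2*n) x * hermiteFn (2*n+1) x) + Real.sqrt (4*(n:ℝ)+2)/2 * ((x * hermiteFn (2*n) x - Real.sqrt (4*(n:ℝ)+2) * hermiteFn (2*n+1) x) * ((1/2) * ∫ t : ℝ, Real.sign (x - t) * hermiteFn (2*n+1) t) + hermiteFn (2*n) x * hermiteFn (2*n+1) x) := by rw [hD1]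
  have e0 : ps x = pGUE (2*n+1) x + Real.sqrt (4*(n:ℝ)+2)/2 * (hermiteFn (2*n) x * ((1/2) * ∫ t : ℝ, Real.sign (x - t) * hermiteFn (2*n+1) t)) := by rw [hps']
  have hcd : pGUE (2*n+1) x = (2*(n:ℝ)+1) * (hermiteFn (2*n) x^2 + hermiteFn (2*n+1) x^2)
      - Real.sqrt (4*(n:ℝ)+2) * x * hermiteFn (2*n) x * hermiteFn (2*n+1) x := by
    have h := pGUE_cd (2*n) x
    rw [show (2*((2*n:ℕ):ℝ)+2) = 4*(n:ℝ)+2 by push_cast; ring,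
      show ((2*n:ℕ):ℝ) = 2*(n:ℝ) by push_cast; ring] at h
    exact h
  rw [e3, e1, e0, (hsu x).deriv, hcd]
  linear_combination (Real.sqrt (4*(n:ℝ)+2) * hermiteFn (2*n) x * hermiteFn (2*n+1) x + Real.sqrt (4*(n:ℝ)+2)^2 * hermiteFn (2*n+1) x * ((1/2) * ∫ t : ℝ, Real.sign (x - t) * hermiteFn (2*n+1) t) - x * hermiteFn (2*n+1) x^2 - x * hermiteFn (2*n) x^2 - x * Real.sqrt (4*(n:ℝ)+2) * hermiteFn (2*n) x * ((1/2) * ∫ t : ℝ, Real.sign (x - t) * hermiteFn (2*n+1) t)) * ha
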